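/- Let B be a positive integer and A ⊂ ℝ^B \ {0}. If the VC dimension of the class of open halfspaces { H_{a,c} : a ∈ A, c ∈ ℝ } is strictly greater than B, then the origin 0 belongs to the convex hull of A. -/

import Mathlib

open Matrix

/-- A class `C` of subsets of `α` shatters a set `X` if every subset of `X`
is cut out of `X` by some member of `C`. -/
def Shatters {α : Type*} (C : Set (Set α)) (X : Set α) : Prop :=
  ∀ Y ⊆ X, ∃ B ∈ C, Y = X ∩ B

/-- The VC dimension of a class `C` of subsets: the supremum (in `ℕ∞`) of the
cardinalities of finite sets shattered by `C`. -/
noncomputable def vcDim {α : Type*} (C : Set (Set α)) : ℕ∞ :=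
  ⨆ (X : Finset α) (_ : Shatters C (X : Set α)), (X.card : ℕ∞)

/-- The open halfspace `H_{a,c} = {x ∈ ℝ^B : aᵀx + c < 0}`. -/
def Halfspace {B : ℕ} (a : Fin B → ℝ) (c : ℝ) : Set (Fin B → ℝ) :=
  {x | a ⬝ᵥ x + c < 0}

private lemma sum_mul_nonpos_aux {n : ℕ} (μ t : Fin n → ℝ)
    (h : ∀ i, t i < 0 ↔ 0 < μ i) : ∑ i, μ i * t i ≤ 0 := by
  apply Finset.sum_nonpos
  intro i _
  rcases lt_or_ge 0 (μ i) with hp | hp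
  · exact le_of_lt (mul_neg_of_pos_of_neg hp ((h i).mpr hp))
  · have ht : 0 ≤ t i := le_of_not_gt fun ht => absurd ((h i).mp ht) (not_lt_of_ge hp)
    exact mul_nonpos_of_nonpos_of_nonneg hp ht

private lemma sum_mul_neg_aux {n : ℕ} (μ t : Fin n → ℝ)
    (h : ∀ i, t i < 0 ↔ 0 < μ i) (hex : ∃ i, 0 < μ i) : ∑ i, μ i * t i < 0 := by
  obtain ⟨i0, hi0⟩ := hex
  have := Finset.sum_lt_sum (f := fun i => μ i * t i) (g := fun _ => (0 : ℝ))
    (s := Finset.univ)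
    (fun i _ => by
      rcases lt_or_ge 0 (μ i) with hp | hp
      · exact le_of_lt (mul_neg_of_pos_of_neg hp ((h i).mpr hp))
      · have ht : 0 ≤ t i := le_of_not_gt fun ht => absurd ((h i).mp ht) (not_lt_of_ge hp)
        exact mul_nonpos_of_nonpos_of_nonneg hp ht)
    ⟨i0, Finset.mem_univ _, mul_neg_of_pos_of_neg hi0 ((h i0).mpr hi0)⟩
  simpa using this

/-- If `A ⊆ ℝ^B \ {0}` and the class of open halfspaces `{H_{a,c} : a ∈ A, c ∈ ℝ}`
has VC dimension strictly greater than `B`, then `0 ∈ conv(A)`. -/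
theorem zero_mem_convexHull_of_vcDim_gt (B : ℕ) (hB : 0 < B)
    (A : Set (Fin B → ℝ)) (hA : (0 : Fin B → ℝ) ∉ A)
    (hvc : (B : ℕ∞) < vcDim {H : Set (Fin B → ℝ) | ∃ a ∈ A, ∃ c : ℝ, H = Halfspace a c}) :
    (0 : Fin B → ℝ) ∈ convexHull ℝ A := by
  classical
  set C : Set (Set (Fin B → ℝ)) := {H | ∃ a ∈ A, ∃ c : ℝ, H = Halfspace a c} with hC
  -- extract a shattered finset of cardinality > B
  rw [vcDim, lt_iSup_iff] at hvc
  obtain ⟨X, hX⟩ := hvc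
  by_cases hsh : Shatters C (X : Set (Fin B → ℝ))
  swap
  · rw [iSup_neg hsh] at hX
    exact absurd hX (by simp)
  rw [iSup_pos hsh] at hX
  have hcard : B + 1 ≤ X.card := Nat.cast_lt.mp hX
  obtain ⟨X', hX'sub, hX'card⟩ := Finset.exists_subset_card_eq hcard
  have hshX' : Shatters C (X' : Set (Fin B → ℝ)) := by
    intro Y hY
    obtain ⟨H, hH, hYeq⟩ := hsh Y (hY.trans (Finset.coe_subset.mpr hX'sub))
    refine ⟨H, hH, ?_⟩
    apply Set.Subset.antisymm
    · exact Set.subset_inter hY (hYeq ▸ Set.inter_subset_right)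
    · intro z hz
      have : z ∈ (X : Set (Fin B → ℝ)) ∩ H :=
        ⟨(Finset.coe_subset.mpr hX'sub) hz.1, hz.2⟩
      exact hYeq ▸ this
  -- enumerate the B+1 points
  set x : Fin (B + 1) → (Fin B → ℝ) :=
    fun i => (X'.equivFin.symm (Fin.cast hX'card.symm i) : Fin B → ℝ) with hx
  have hxinj : Function.Injective x := by
    intro i j hij
    have := X'.equivFin.symm.injective (Subtype.ext hij)
    simpa [Fin.ext_iff] using congrArg Fin.val this
  have hxmem : ∀ i, x i ∈ X' := fun i => (X'.equivFin.symm _).2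
  -- realize every pattern
  have key : ∀ S : Finset (Fin (B + 1)),
      ∃ a ∈ A, ∃ c : ℝ, ∀ i, (a ⬝ᵥ x i + c < 0 ↔ i ∈ S) := by
    intro S
    obtain ⟨H, hH, hYeq⟩ := hshX' (↑(S.image x)) (by
      intro z hz
      simp only [Finset.coe_image, Set.mem_image] at hz
      obtain ⟨i, _, rfl⟩ := hz
      exact hxmem i)
    obtain ⟨a, haA, c, rfl⟩ := hH
    refine ⟨a, haA, c, fun i => ⟨fun hlt => ?_, fun hiS => ?_⟩⟩
    · have : x i ∈ (↑(S.image x) : Set (Fin B → ℝ)) := by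
        rw [hYeq]; exact ⟨hxmem i, hlt⟩
      simp only [Finset.coe_image, Set.mem_image, Finset.mem_coe] at this
      obtain ⟨j, hj, hji⟩ := this
      exact hxinj hji ▸ hj
    · have : x i ∈ (↑(S.image x) : Set (Fin B → ℝ)) := by
        simp only [Finset.coe_image, Set.mem_image, Finset.mem_coe]
        exact ⟨i, hiS, rfl⟩
      rw [hYeq] at this
      exact this.2
  choose aS haSA cS hpat using key
  -- suppose 0 ∉ conv A; separate from the finitely many normals used
  by_contra h0
  have h0' : (0 : Fin B → ℝ) ∉ convexHull ℝ (Set.range aS) := fun h =>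
    h0 (convexHull_mono (Set.range_subset_iff.mpr haSA) h)
  obtain ⟨f, u, hu0, hub⟩ := geometric_hahn_banach_point_closed
    (convex_convexHull ℝ _) ((Set.finite_range aS).isCompact_convexHull (𝕜 := ℝ)).isClosed h0'
  have hfpos : ∀ S, 0 < f (aS S) := by
    intro S
    have h1 : u < f (aS S) := hub _ (subset_convexHull ℝ _ ⟨S, rfl⟩)
    have h2 : f 0 < f (aS S) := lt_trans hu0 h1
    simpa using h2
  -- the evaluation matrix
  set M : Matrix (Fin (B + 1)) (Fin (B + 1)) ℝ :=
    Matrix.of (fun i => Fin.snoc (x i) 1) with hM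
  have heval : ∀ (a : Fin B → ℝ) (c : ℝ) (i : Fin (B + 1)),
      (M *ᵥ Fin.snoc a c) i = a ⬝ᵥ x i + c := by
    intro a c i
    show (fun j => Fin.snoc (x i) (1 : ℝ) j) ⬝ᵥ Fin.snoc a c = a ⬝ᵥ x i + c
    simp only [dotProduct, Fin.sum_univ_castSucc, Fin.snoc_castSucc, Fin.snoc_last, one_mul]
    congr 1
    exact Finset.sum_congr rfl fun j _ => mul_comm _ _
  have hsum : ∀ (μ : Fin (B + 1) → ℝ) (a : Fin B → ℝ) (c : ℝ),
      ∑ i, μ i * (a ⬝ᵥ x i + c) = (Mᵀ *ᵥ μ) ⬝ᵥ Fin.snoc a c := by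
    intro μ a c
    rw [Matrix.mulVec_transpose, ← Matrix.dotProduct_mulVec]
    exact Finset.sum_congr rfl fun i _ => by rw [heval]
  by_cases hdet : M.det = 0
  · -- singular case: a nonzero linear dependence among the evaluations
    have hdetT : Mᵀ.det = 0 := by rwa [Matrix.det_transpose]
    obtain ⟨μ, hμ0, hμ⟩ := Matrix.exists_mulVec_eq_zero_iff.mpr hdetT
    obtain ⟨ν, hνpos, hνd⟩ : ∃ ν : Fin (B + 1) → ℝ, (∃ i, 0 < ν i) ∧ Mᵀ *ᵥ ν = 0 := by
      by_cases hp : ∃ i, 0 < μ i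
      · exact ⟨μ, hp, hμ⟩
      · push_neg at hp
        obtain ⟨i, hi⟩ := Function.ne_iff.mp hμ0
        refine ⟨-μ, ⟨i, ?_⟩, by rw [Matrix.mulVec_neg, hμ, neg_zero]⟩
        simpa using lt_of_le_of_ne (hp i) hi
    set S : Finset (Fin (B + 1)) := Finset.univ.filter (fun i => 0 < ν i) with hS
    have hpat' : ∀ i, aS S ⬝ᵥ x i + cS S < 0 ↔ 0 < ν i := by
      intro i
      rw [hpat S i, hS]
      simp
    have hlt : ∑ i, ν i * (aS S ⬝ᵥ x i + cS S) < 0 :=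
      sum_mul_neg_aux ν (fun i => aS S ⬝ᵥ x i + cS S) hpat' hνpos
    rw [hsum ν (aS S) (cS S), hνd, zero_dotProduct] at hlt
    exact lt_irrefl 0 hlt
  · -- nonsingular case: represent the separating functional via the points
    have hunit : IsUnit Mᵀ.det := by
      rw [Matrix.det_transpose]; exact isUnit_iff_ne_zero.mpr hdet
    set ℓ : Fin (B + 1) → ℝ := Fin.snoc (fun j => f (Pi.single j 1)) 0 with hℓ
    have hrep : ∀ (a : Fin B → ℝ) (c : ℝ), ℓ ⬝ᵥ Fin.snoc a c = f a := by
      intro a c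
      have ha : f a = ∑ j, a j * f (Pi.single j 1) := by
        conv_lhs => rw [← Finset.univ_sum_single a]
        rw [map_sum]
        refine Finset.sum_congr rfl fun j _ => ?_
        have : Pi.single j (a j) = a j • (Pi.single j 1 : Fin B → ℝ) := by
          rw [← Pi.single_smul, smul_eq_mul, mul_one]
        rw [this, f.map_smul, smul_eq_mul]
      rw [ha]
      simp only [dotProduct, Fin.sum_univ_castSucc, hℓ, Fin.snoc_castSucc, Fin.snoc_last,
        zero_mul, add_zero]
      exact Finset.sum_congr rfl fun j _ => mul_comm _ _
    set μ : Fin (B + 1) → ℝ := (Mᵀ)⁻¹ *ᵥ ℓ with hμdef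
    have hμ : Mᵀ *ᵥ μ = ℓ := by
      rw [hμdef, Matrix.mulVec_mulVec, Matrix.mul_nonsing_inv _ hunit, Matrix.one_mulVec]
    set S : Finset (Fin (B + 1)) := Finset.univ.filter (fun i => 0 < μ i) with hS
    have hpat' : ∀ i, aS S ⬝ᵥ x i + cS S < 0 ↔ 0 < μ i := by
      intro i
      rw [hpat S i, hS]
      simp
    have hle : ∑ i, μ i * (aS S ⬝ᵥ x i + cS S) ≤ 0 :=
      sum_mul_nonpos_aux μ (fun i => aS S ⬝ᵥ x i + cS S) hpat'
    rw [hsum μ (aS S) (cS S), hμ, hrep] at hle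
    exact absurd (hfpos S) (not_lt_of_ge hle)
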